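/- Let h > 0, n ≥ 1, t_j = jh, and μ_n = √(t_n/π) − (h/√(4π)) Σ'_{j=0}^{n-1} (t_n − t_j)^{-1/2} (the prime halving the j=0 term). Then μ_n = (√(t_n)/√π)(1 − (1/(2√n)) Σ'_{j=0}^{n-1} (n − j)^{-1/2}) and |μ_n| ≤ C √h for a constant C independent of n and h. -/

import Mathlib

open scoped BigOperators

lemma inv_sqrt_eq (x : ℝ) (hx : 0 ≤ x) : x ^ (-(1/2) : ℝ) = (Real.sqrt x)⁻¹ := by
  rw [Real.rpow_neg hx, ← Real.sqrt_eq_rpow]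

lemma sqrt_gap (y : ℝ) (hy : 0 ≤ y) :
    (Real.sqrt (y+1) - Real.sqrt y) * (Real.sqrt (y+1) + Real.sqrt y) = 1 := by
  have h1 : Real.sqrt (y+1) * Real.sqrt (y+1) = y + 1 := Real.mul_self_sqrt (by linarith)
  have h2 : Real.sqrt y * Real.sqrt y = y := Real.mul_self_sqrt hy
  nlinarith

lemma step_upper (y : ℝ) (hy : 0 ≤ y) :
    (y+1) ^ (-(1/2) : ℝ) ≤ 2 * (Real.sqrt (y+1) - Real.sqrt y) := by
  have hb : 0 < Real.sqrt (y+1) := Real.sqrt_pos.mpr (by linarith)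
  have ha : 0 ≤ Real.sqrt y := Real.sqrt_nonneg y
  have hab : Real.sqrt y ≤ Real.sqrt (y+1) := Real.sqrt_le_sqrt (by linarith)
  have hg := sqrt_gap y hy
  rw [inv_sqrt_eq _ (by linarith), inv_eq_one_div, div_le_iff₀ hb]
  nlinarith

lemma step_lower (y : ℝ) (hy : 1 ≤ y) :
    2 * (Real.sqrt (y+1) - Real.sqrt y) ≤ y ^ (-(1/2) : ℝ) := by
  have ha : 0 < Real.sqrt y := Real.sqrt_pos.mpr (by linarith)
  have hab : Real.sqrt y ≤ Real.sqrt (y+1) := Real.sqrt_le_sqrt (by linarith)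
  have hg := sqrt_gap y (by linarith)
  rw [inv_sqrt_eq _ (by linarith), inv_eq_one_div, le_div_iff₀ ha]
  nlinarith

lemma sum_upper (m : ℕ) :
    ∑ k ∈ Finset.Ico 1 (m+1), ((k:ℝ)) ^ (-(1/2) : ℝ) ≤ 2 * Real.sqrt m := by
  induction m with
  | zero => simp
  | succ m ih =>
    rw [Finset.sum_Ico_succ_top (by omega)]
    have := step_upper (m:ℝ) (by positivity)
    push_cast
    push_cast at ih
    linarith

lemma sum_lower (m : ℕ) :
    2 * Real.sqrt (m+1) - 2 ≤ ∑ k ∈ Finset.Ico 1 (m+1), ((k:ℝ)) ^ (-(1/2) : ℝ) := by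
  induction m with
  | zero => simp
  | succ m ih =>
    rw [Finset.sum_Ico_succ_top (by omega)]
    have := step_lower ((m:ℝ)+1) (by linarith [Nat.cast_nonneg (α := ℝ) m])
    push_cast
    push_cast at ih
    linarith

lemma reindex (n : ℕ) :
    ∑ j ∈ Finset.Ico 1 n, ((n:ℝ) - (j:ℝ)) ^ (-(1/2) : ℝ)
      = ∑ k ∈ Finset.Ico 1 n, ((k:ℝ)) ^ (-(1/2) : ℝ) := by
  refine Finset.sum_nbij' (fun j => n - j) (fun k => n - k) ?_ ?_ ?_ ?_ ?_
  · intro a ha; simp only [Finset.mem_Ico] at *; omega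
  · intro a ha; simp only [Finset.mem_Ico] at *; omega
  · intro a ha; simp only [Finset.mem_Ico] at ha; omega
  · intro a ha; simp only [Finset.mem_Ico] at ha; omega
  · intro a ha
    simp only [Finset.mem_Ico] at ha
    congr 1
    rw [Nat.cast_sub ha.2.le]

/-- The endpoint singularity-correction weight
`μ_n = √(t_n/π) − (h/√(4π)) Σ'_{j=0}^{n-1}(t_n − t_j)^{-1/2}` (primed sum halving
the `j = 0` term, `t_j = jh`) satisfies
`μ_n = (√t_n/√π)(1 − (1/(2√n)) Σ'_{j=0}^{n-1}(n−j)^{-1/2})` and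
`|μ_n| ≤ C√h` with `C` independent of `n` and `h`. -/
theorem correction_weight_bound :
    ∃ C : ℝ, ∀ h : ℝ, 0 < h → ∀ n : ℕ, 1 ≤ n →
      (Real.sqrt ((n : ℝ) * h / Real.pi)
          - (h / Real.sqrt (4 * Real.pi)) *
            ((1/2) * ((n : ℝ) * h) ^ (-(1/2) : ℝ)
              + ∑ j ∈ Finset.Ico 1 n, ((n : ℝ) * h - (j : ℝ) * h) ^ (-(1/2) : ℝ))
        = (Real.sqrt ((n : ℝ) * h) / Real.sqrt Real.pi) *
            (1 - (1 / (2 * Real.sqrt (n : ℝ))) *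
              ((1/2) * (n : ℝ) ^ (-(1/2) : ℝ)
                + ∑ j ∈ Finset.Ico 1 n, ((n : ℝ) - (j : ℝ)) ^ (-(1/2) : ℝ)))) ∧
      |Real.sqrt ((n : ℝ) * h / Real.pi)
          - (h / Real.sqrt (4 * Real.pi)) *
            ((1/2) * ((n : ℝ) * h) ^ (-(1/2) : ℝ)
              + ∑ j ∈ Finset.Ico 1 n, ((n : ℝ) * h - (j : ℝ) * h) ^ (-(1/2) : ℝ))|
        ≤ C * Real.sqrt h := by
  refine ⟨1, fun h hh n hn => ?_⟩
  obtain ⟨m, rfl⟩ : ∃ m, n = m + 1 := ⟨n - 1, by omega⟩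
  set n := m + 1 with hn'
  set a := Real.sqrt (n : ℝ) with hadef
  set b := Real.sqrt h with hbdef
  set p := Real.sqrt Real.pi with hpdef
  set s := ∑ j ∈ Finset.Ico 1 n, ((n:ℝ) - (j:ℝ)) ^ (-(1/2) : ℝ) with hsdef
  have hπ := Real.pi_pos
  have ha : 1 ≤ a := by
    rw [hadef, show (1:ℝ) = Real.sqrt 1 by simp]
    exact Real.sqrt_le_sqrt (by exact_mod_cast hn)
  have ha0 : 0 < a := lt_of_lt_of_le one_pos ha
  have hb : 0 < b := Real.sqrt_pos.mpr hh
  have hp : 1 ≤ p := by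
    rw [hpdef, show (1:ℝ) = Real.sqrt 1 by simp]
    exact Real.sqrt_le_sqrt (by linarith [Real.pi_gt_three])
  have hp0 : 0 < p := lt_of_lt_of_le one_pos hp
  have hbb : b * b = h := Real.mul_self_sqrt hh.le
  have hsum : ∑ j ∈ Finset.Ico 1 n, ((n:ℝ)*h - (j:ℝ)*h) ^ (-(1/2) : ℝ) = s * b⁻¹ := by
    rw [hsdef, Finset.sum_mul]
    refine Finset.sum_congr rfl fun j hj => ?_
    obtain ⟨_, hj2⟩ := Finset.mem_Ico.mp hj
    have hjn : (j:ℝ) ≤ n := by exact_mod_cast hj2.le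
    rw [show (n:ℝ)*h - (j:ℝ)*h = ((n:ℝ)-(j:ℝ))*h by ring,
      Real.mul_rpow (by linarith) hh.le, inv_sqrt_eq h hh.le]
  have hnh : ((n:ℝ)*h) ^ (-(1/2) : ℝ) = a⁻¹ * b⁻¹ := by
    rw [Real.mul_rpow (Nat.cast_nonneg n) hh.le, inv_sqrt_eq _ (Nat.cast_nonneg n),
      inv_sqrt_eq h hh.le]
  have hnr : ((n:ℝ)) ^ (-(1/2) : ℝ) = a⁻¹ := inv_sqrt_eq _ (Nat.cast_nonneg n)
  have h4 : Real.sqrt 4 = 2 := by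
    rw [show (4:ℝ) = 2^2 by norm_num, Real.sqrt_sq (by norm_num : (0:ℝ) ≤ 2)]
  have h4π : Real.sqrt (4 * Real.pi) = 2 * p := by
    rw [Real.sqrt_mul (by norm_num) Real.pi, h4, hpdef]
  have hnhπ : Real.sqrt ((n:ℝ) * h / Real.pi) = a * b / p := by
    rw [Real.sqrt_div (by positivity) Real.pi, Real.sqrt_mul (Nat.cast_nonneg n) h]
  have hab : Real.sqrt ((n:ℝ) * h) = a * b := Real.sqrt_mul (Nat.cast_nonneg n) h
  -- s bounds
  have hsu : s ≤ 2 * a := by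
    rw [hsdef, reindex]
    calc ∑ k ∈ Finset.Ico 1 (m+1), ((k:ℝ)) ^ (-(1/2) : ℝ) ≤ 2 * Real.sqrt m := sum_upper m
    _ ≤ 2 * a := by
      rw [hadef]
      have : Real.sqrt (m:ℝ) ≤ Real.sqrt ((n:ℝ)) := by
        apply Real.sqrt_le_sqrt; rw [hn']; push_cast; linarith
      linarith
  have hsl : 2 * a - 2 ≤ s := by
    rw [hsdef, reindex]
    have := sum_lower m
    have hcast : Real.sqrt ((m:ℝ)+1) = a := by rw [hadef, hn']; push_cast; ring_nf
    linarith [hcast ▸ this]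
  constructor
  · rw [hsum, hnh, hnr, h4π, hnhπ, hab, ← hbb]
    have ha' : a ≠ 0 := ha0.ne'
    have hb' : b ≠ 0 := hb.ne'
    have hp' : p ≠ 0 := hp0.ne'
    field_simp
  · rw [hsum, hnh, h4π, hnhπ, ← hbb]
    have key : a * b / p - b * b / (2 * p) * (1/2 * (a⁻¹ * b⁻¹) + s * b⁻¹)
        = (b / p) * (a - (1/(4*a) + s/2)) := by
      field_simp
      ring
    rw [key]
    have h4a0 : (0:ℝ) ≤ 1/(4*a) := by positivity
    have h4a1 : 1/(4*a) ≤ 1 := by rw [div_le_one (by linarith)]; linarith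
    have habs : |a - (1/(4*a) + s/2)| ≤ 1 := by
      rw [abs_le]; constructor <;> [linarith; linarith]
    calc |b / p * (a - (1/(4*a) + s/2))| = (b/p) * |a - (1/(4*a) + s/2)| := by
          rw [abs_mul, abs_of_nonneg (by positivity)]
      _ ≤ (b/p) * 1 := by
          exact mul_le_mul_of_nonneg_left habs (by positivity)
      _ ≤ 1 * b := by
          rw [mul_one, one_mul]; exact div_le_self hb.le hp
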